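/- Let K be a finitely generated projective R-module, V an R-module, and σ : K → V an R-linear map. If the dual map σ^∨ : V^∨ → K^∨ is surjective, then σ admits a retraction: there exists an R-linear map r : V → K with r ∘ σ = id_K. In particular, σ is a split injection. -/

import Mathlib

/-- Let `K` be a finitely generated projective `R`-module, `V` an
`R`-module, and `σ : K → V` an `R`-linear map. If the dual map
`σ^∨ : V^∨ → K^∨` is surjective, then `σ` admits a retraction `r : V → K` with
`r ∘ σ = id`; in particular `σ` is a split injection. -/
theorem retraction_of_dualMap_surjective
    {R : Type} [CommRing R]
    {K V : Type} [AddCommGroup K] [Module R K] [AddCommGroup V] [Module R V]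
    [Module.Finite R K] [Module.Projective R K]
    (σ : K →ₗ[R] V)
    (h : Function.Surjective σ.dualMap) :
    ∃ r : V →ₗ[R] K, r ∘ₗ σ = LinearMap.id := by
  obtain ⟨n, f, hf⟩ := Module.Finite.exists_fin' R K
  obtain ⟨s, hs⟩ := Module.projective_lifting_property f LinearMap.id hf
  -- for each coordinate, lift the functional along σ.dualMap
  choose g hg using fun j => h ((LinearMap.proj j) ∘ₗ s)
  refine ⟨f ∘ₗ LinearMap.pi g, ?_⟩
  ext x
  have : (fun j => g j (σ x)) = s x := by
    funext j
    have := congrFun (congrArg (fun (φ : K →ₗ[R] R) => (φ : K → R)) (hg j)) x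
    simpa [LinearMap.dualMap, Module.Dual.transpose_apply] using this
  have hsx := congrFun (congrArg (fun (φ : K →ₗ[R] K) => (φ : K → K)) hs) x
  simp only [LinearMap.comp_apply, LinearMap.pi_apply, LinearMap.id_apply] at hsx ⊢
  have h2 : (LinearMap.pi g) (σ x) = s x := funext fun j => congrFun this j
  rw [h2]; exact hsx
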